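/- Let k be a natural number and let G = ℤ × F_k, the direct product of the integers with the free group of rank k. Then every subgroup of G either contains a non-abelian free subgroup, or is virtually free abelian of rank at most 2. -/

import Mathlib

/-- A group contains a non-abelian free subgroup: there is an injective homomorphism
from the free group of rank 2. -/
def ContainsNonabelianFree (G : Type*) [Group G] : Prop :=
  ∃ f : FreeGroup (Fin 2) →* G, Function.Injective f

/-- A group is virtually free abelian of rank at most 2: it has a finite-index subgroup
isomorphic to `ℤ^k` for some `0 ≤ k ≤ 2`. -/
def VirtuallyFreeAbelianRankLeTwo (G : Type*) [Group G] : Prop :=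
  ∃ K : Subgroup G, K.FiniteIndex ∧ ∃ k : ℕ, k ≤ 2 ∧
    Nonempty (K ≃* Multiplicative (Fin k → ℤ))

/-- On a free group over a subsingleton type, the lift of the constant map to `1 : ℤ`
is injective. -/
lemma freeGroup_lift_injective_of_subsingleton {ι : Type*} [Subsingleton ι] :
    Function.Injective (FreeGroup.lift (fun _ : ι => Multiplicative.ofAdd (1 : ℤ))) := by
  set φ := FreeGroup.lift (fun _ : ι => Multiplicative.ofAdd (1 : ℤ)) with hφ
  rcases isEmpty_or_nonempty ι with h | h
  · have key : ∀ x : FreeGroup ι, x = 1 := by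
      intro x
      induction x using FreeGroup.induction_on with
      | C1 => rfl
      | of i => exact (h.false i).elim
      | inv_of x ih => rw [ih, inv_one]
      | mul x y ihx ihy => rw [ihx, ihy, one_mul]
    intro x y _
    rw [key x, key y]
  · obtain ⟨i0⟩ := h
    have key : ∀ x : FreeGroup ι, x = FreeGroup.of i0 ^ (Multiplicative.toAdd (φ x)) := by
      intro x
      induction x using FreeGroup.induction_on with
      | C1 => simp
      | of i =>
        rw [Subsingleton.elim i i0]
        rw [hφ,
          FreeGroup.lift_apply_of, toAdd_ofAdd, zpow_one]
      | inv_of x ih =>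
        rw [map_inv, toAdd_inv, zpow_neg, ← ih]
      | mul x y ihx ihy =>
        rw [map_mul, toAdd_mul, zpow_add, ← ihx, ← ihy]
    intro x y h
    rw [key x, key y, h]

/-- Every subgroup of `ℤ × F_k` either contains a non-abelian free subgroup or is
virtually free abelian of rank at most 2. -/
theorem Z_times_free_tits_alternative (k : ℕ)
    (H : Subgroup (Multiplicative ℤ × FreeGroup (Fin k))) :
    ContainsNonabelianFree H ∨ VirtuallyFreeAbelianRankLeTwo H := by
  classical
  let p : ↥H →* FreeGroup (Fin k) := (MonoidHom.snd _ _).comp H.subtype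
  let P : Subgroup (FreeGroup (Fin k)) := p.range
  let p' : ↥H →* ↥P := p.rangeRestrict
  have hp' : Function.Surjective p' := p.rangeRestrict_surjective
  let ι := IsFreeGroup.Generators ↥P
  rcases subsingleton_or_nontrivial ι with hsub | hnt
  · right
    let φ0 : FreeGroup ι →* Multiplicative ℤ :=
      FreeGroup.lift fun _ => Multiplicative.ofAdd (1 : ℤ)
    have hφ0 : Function.Injective φ0 := freeGroup_lift_injective_of_subsingleton
    let φP : ↥P →* Multiplicative ℤ := φ0.comp (IsFreeGroup.toFreeGroup ↥P).toMonoidHom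
    have hφP : Function.Injective φP :=
      hφ0.comp (IsFreeGroup.toFreeGroup ↥P).injective
    let ψ : ↥H →* Multiplicative (Fin 2 → ℤ) :=
      { toFun := fun h => Multiplicative.ofAdd
          ![Multiplicative.toAdd h.val.1, Multiplicative.toAdd (φP (p' h))]
        map_one' := by
          simp only [OneMemClass.coe_one, Prod.fst_one, toAdd_one, map_one]
          have h0 : (![(0 : ℤ), 0] : Fin 2 → ℤ) = 0 := by
            funext i; fin_cases i <;> rfl
          rw [h0, ofAdd_zero]
        map_mul' := by
          intro x y
          show Multiplicative.ofAdd _ = Multiplicative.ofAdd _ * Multiplicative.ofAdd _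
          rw [← ofAdd_add]
          congr 1
          funext i
          fin_cases i <;>
            simp [Subgroup.coe_mul, Prod.fst_mul, toAdd_mul] }
    have hψ : Function.Injective ψ := by
      rw [injective_iff_map_eq_one]
      intro h hh
      have h0 : (![Multiplicative.toAdd h.val.1,
          Multiplicative.toAdd (φP (p' h))] : Fin 2 → ℤ) = 0 :=
        congrArg Multiplicative.toAdd hh
      have h1 : Multiplicative.toAdd ((h : Multiplicative ℤ × FreeGroup (Fin k)).1) = 0 := by
        simpa using congrFun h0 0
      have h2 : Multiplicative.toAdd (φP (p' h)) = 0 := by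
        simpa using congrFun h0 1
      have h3 : p' h = 1 := by
        apply hφP
        rw [map_one]
        exact Multiplicative.toAdd.injective (by simpa using h2)
      have h4 : (h : Multiplicative ℤ × FreeGroup (Fin k)).2 = 1 := by
        have h4' : p h = 1 := by
          rw [← p.coe_rangeRestrict h]
          exact congrArg Subtype.val h3
        exact h4'
      have h5 : (h : Multiplicative ℤ × FreeGroup (Fin k)).1 = 1 :=
        Multiplicative.toAdd.injective (by simpa using h1)
      apply Subtype.ext
      exact Prod.ext h5 h4
    let ψa : Additive ↥H →+ (Fin 2 → ℤ) := MonoidHom.toAdditiveLeft ψ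
    have hψa : Function.Injective ψa := by
      intro a b hab
      have h1 : ψ (Additive.toMul a) = ψ (Additive.toMul b) :=
        Multiplicative.toAdd.injective hab
      exact Additive.toMul.injective (hψ h1)
    let S : AddSubgroup (Fin 2 → ℤ) := ψa.range
    let N : Submodule ℤ (Fin 2 → ℤ) := AddSubgroup.toIntSubmodule S
    let e1 : Additive ↥H ≃+ S := AddMonoidHom.ofInjective hψa
    let e2 : S ≃+ N :=
      { toFun := fun x => ⟨x.1, x.2⟩
        invFun := fun x => ⟨x.1, x.2⟩
        left_inv := fun _ => rfl
        right_inv := fun _ => rfl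
        map_add' := fun _ _ => rfl }
    obtain ⟨m, bN⟩ := Submodule.basisOfPid (Pi.basisFun ℤ (Fin 2)) N
    have hm : m ≤ 2 := by
      have h1 : Module.finrank ℤ N = m := by
        rw [Module.finrank_eq_card_basis bN, Fintype.card_fin]
      have h2 : Module.finrank ℤ N ≤ Module.finrank ℤ (Fin 2 → ℤ) := N.finrank_le
      rw [h1, Module.finrank_pi, Fintype.card_fin] at h2
      exact h2
    let e3 : N ≃ₗ[ℤ] (Fin m → ℤ) := bN.equivFun
    let eaH : Additive ↥H ≃+ (Fin m → ℤ) := (e1.trans e2).trans e3.toAddEquiv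
    let eH : ↥H ≃* Multiplicative (Fin m → ℤ) := AddEquiv.toMultiplicativeRight eaH
    exact ⟨⊤, inferInstance, m, hm, ⟨(Subgroup.topEquiv).trans eH⟩⟩
  · left
    obtain ⟨a, b, hab⟩ := exists_pair_ne ι
    let c : ι → ↥H := fun i => Function.surjInv hp' (IsFreeGroup.of i)
    let s : ↥P →* ↥H := IsFreeGroup.lift c
    have hsec : ∀ x, p' (s x) = x := by
      have hcomp : p'.comp s = MonoidHom.id ↥P := by
        apply IsFreeGroup.ext_hom
        intro i
        simp [s, c, IsFreeGroup.lift_of, Function.surjInv_eq hp']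
      intro x
      exact DFunLike.congr_fun hcomp x
    have hs : Function.Injective s := by
      intro x y h
      have hx := hsec x
      rw [h, hsec y] at hx
      exact hx.symm
    let j : Fin 2 → ι := ![a, b]
    let r : ι → Fin 2 := fun x => if x = a then 0 else 1
    have hrj : ∀ x : FreeGroup (Fin 2), FreeGroup.map r (FreeGroup.map j x) = x := by
      intro x
      rw [FreeGroup.map.comp]
      have : r ∘ j = id := by
        funext i
        fin_cases i <;> simp [r, j, hab.symm]
      rw [this, FreeGroup.map.id]
    have hj : Function.Injective (FreeGroup.map j : FreeGroup (Fin 2) →* FreeGroup ι) :=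
      Function.LeftInverse.injective hrj
    let e : FreeGroup ι ≃* ↥P := (IsFreeGroup.toFreeGroup ↥P).symm
    let f : FreeGroup (Fin 2) →* ↥H := s.comp (e.toMonoidHom.comp (FreeGroup.map j))
    exact ⟨f, hs.comp (e.injective.comp hj)⟩
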